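/- Assume that δ ≤ |V|/2. Then G admits a Defense-Optimal Nash equilibrium of AD_{α,δ}(G) if and only if G has a δ-Partitionable fractional perfect matching. -/

import Mathlib

open Finset
open scoped Classical

variable {V : Type*} [Fintype V] [DecidableEq V]

/-- The sum of `f` over the edges (elements of `Sym2 V`) containing the vertex `v`. -/
noncomputable def fracDeg (f : Sym2 V → ℝ) (v : V) : ℝ :=
  ∑ e ∈ Finset.univ.filter (fun e : Sym2 V => v ∈ e), f e

/-- A mixed profile of the game `AD_{α,δ}(G)`: each of the `α` attackers has a
probability distribution on the vertices, and each of the `δ` defenders has a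
probability distribution on the edges of `G`. -/
structure MixedProfile (G : SimpleGraph V) (α δ : ℕ) where
  atk : Fin α → V → ℝ
  dfn : Fin δ → Sym2 V → ℝ
  atk_nonneg : ∀ i v, 0 ≤ atk i v
  atk_sum : ∀ i, ∑ v : V, atk i v = 1
  dfn_nonneg : ∀ j e, 0 ≤ dfn j e
  dfn_edge : ∀ j e, e ∉ G.edgeSet → dfn j e = 0
  dfn_sum : ∀ j, ∑ e : Sym2 V, dfn j e = 1

namespace MixedProfile

variable {G : SimpleGraph V} {α δ : ℕ}

/-- A pure configuration: a vertex for each attacker, an edge for each defender. -/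
abbrev Config (V : Type*) (α δ : ℕ) := (Fin α → V) × (Fin δ → Sym2 V)

/-- The probability of a pure configuration under the (independent) mixed profile. -/
noncomputable def configProb (σ : MixedProfile G α δ) (c : Config V α δ) : ℝ :=
  (∏ i, σ.atk i (c.1 i)) * ∏ j, σ.dfn j (c.2 j)

/-- The number of attackers choosing vertex `w` in configuration `c`. -/
noncomputable def atkCount (c : Config V α δ) (w : V) : ℕ :=
  (Finset.univ.filter (fun i : Fin α => c.1 i = w)).card

/-- The number of defenders choosing an edge containing `w` in configuration `c`. -/
noncomputable def dfnCount (c : Config V α δ) (w : V) : ℕ :=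
  (Finset.univ.filter (fun j : Fin δ => w ∈ c.2 j)).card

/-- The utility of defender `d` at a pure configuration: the fair share
`|A_s(u)|/|D_s(u)| + |A_s(v)|/|D_s(v)|` for its chosen edge `(u,v)`. -/
noncomputable def defUtilPure (c : Config V α δ) (d : Fin δ) : ℝ :=
  ∑ w ∈ Finset.univ.filter (fun w : V => w ∈ c.2 d),
    (atkCount c w : ℝ) / (dfnCount c w : ℝ)

/-- The utility of attacker `a` at a pure configuration: `0` if caught, `1` otherwise. -/
noncomputable def atkUtilPure (c : Config V α δ) (a : Fin α) : ℝ :=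
  if ∃ j, c.1 a ∈ c.2 j then 0 else 1

/-- Expected utility of defender `d`. -/
noncomputable def expDefUtil (σ : MixedProfile G α δ) (d : Fin δ) : ℝ :=
  ∑ c : Config V α δ, σ.configProb c * defUtilPure c d

/-- Expected utility of attacker `a`. -/
noncomputable def expAtkUtil (σ : MixedProfile G α δ) (a : Fin α) : ℝ :=
  ∑ c : Config V α δ, σ.configProb c * atkUtilPure c a

/-- `σ` is a Nash equilibrium: no player can strictly increase her expected utility by
unilaterally changing her mixed strategy. -/
def IsNash (σ : MixedProfile G α δ) : Prop :=
  (∀ (τ : MixedProfile G α δ) (a : Fin α),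
      (∀ i, i ≠ a → τ.atk i = σ.atk i) → τ.dfn = σ.dfn →
      τ.expAtkUtil a ≤ σ.expAtkUtil a) ∧
  (∀ (τ : MixedProfile G α δ) (d : Fin δ),
      τ.atk = σ.atk → (∀ j, j ≠ d → τ.dfn j = σ.dfn j) →
      τ.expDefUtil d ≤ σ.expDefUtil d)

/-- The union of the supports of the defenders. -/
noncomputable def dfnSupports (σ : MixedProfile G α δ) : Finset (Sym2 V) :=
  Finset.univ.filter (fun e => ∃ j, 0 < σ.dfn j e)

/-- The union of the supports of the attackers. -/
noncomputable def atkSupports (σ : MixedProfile G α δ) : Finset V :=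
  Finset.univ.filter (fun v => ∃ i, 0 < σ.atk i v)

/-- The probability that some defender chooses an edge containing `v`. -/
noncomputable def hitProb (σ : MixedProfile G α δ) (v : V) : ℝ :=
  1 - ∏ j, (1 - fracDeg (σ.dfn j) v)

/-- The minimum hitting probability of the profile. -/
noncomputable def minHit [Nonempty V] (σ : MixedProfile G α δ) : ℝ :=
  Finset.univ.inf' Finset.univ_nonempty σ.hitProb

/-- The Defense-Ratio of a profile. -/
noncomputable def defenseRatio (σ : MixedProfile G α δ) : ℝ :=
  (α : ℝ) / ∑ d, σ.expDefUtil d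

end MixedProfile

/-- `F` is an edge cover of `G`. -/
def IsEdgeCover (G : SimpleGraph V) (F : Finset (Sym2 V)) : Prop :=
  (↑F ⊆ G.edgeSet) ∧ ∀ v : V, ∃ e ∈ F, v ∈ e

/-- `β'(G)`: the minimum size of an edge cover of `G`. -/
noncomputable def edgeCoverNumber (G : SimpleGraph V) : ℕ :=
  sInf {n : ℕ | ∃ F : Finset (Sym2 V), IsEdgeCover G F ∧ F.card = n}

/-- `E(f)`: the set of edges with positive weight. -/
noncomputable def fSupp (f : Sym2 V → ℝ) : Finset (Sym2 V) :=
  Finset.univ.filter (fun e => 0 < f e)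

/-- `f` is a fractional perfect matching of `G`. -/
def IsFPM (G : SimpleGraph V) (f : Sym2 V → ℝ) : Prop :=
  (∀ e, 0 ≤ f e ∧ f e ≤ 1) ∧ (∀ e, e ∉ G.edgeSet → f e = 0) ∧ ∀ v, fracDeg f v = 1

/-- Two edge sets are vertex-disjoint. -/
def VDisj (F F' : Finset (Sym2 V)) : Prop :=
  ∀ v : V, (∃ e ∈ F, v ∈ e) → ¬ ∃ e ∈ F', v ∈ e

/-- `f` is a `δ`-Partitionable fractional perfect matching: `E(f)` splits into `δ`
nonempty pairwise vertex-disjoint partites each of total weight `|V|/(2δ)`. -/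
def IsDeltaPartitionable (f : Sym2 V → ℝ) (δ : ℕ) : Prop :=
  ∃ P : Fin δ → Finset (Sym2 V),
    (∀ j, (P j).Nonempty) ∧
    (∀ j k, j ≠ k → VDisj (P j) (P k)) ∧
    (∀ j, P j ⊆ fSupp f) ∧
    (∀ e ∈ fSupp f, ∃ j, e ∈ P j) ∧
    ∀ j, ∑ e ∈ P j, f e = (Fintype.card V : ℝ) / (2 * δ)

open MixedProfile


/-! ### Auxiliary lemmas -/

section AuxSumProd
set_option linter.unusedSectionVars false
variable {ι X : Type*} [Fintype ι] [Fintype X] [DecidableEq ι]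


lemma sum_prod_fun (q : ι → X → ℝ) :
    ∑ c : ι → X, ∏ i, q i (c i) = ∏ i, ∑ x, q i x :=
  (Fintype.prod_sum _).symm

lemma sum_prod_marginal (p : ι → X → ℝ) (i : ι) (hp : ∀ i', i' ≠ i → ∑ x, p i' x = 1)
    (g : X → ℝ) :
    ∑ c : ι → X, (∏ i', p i' (c i')) * g (c i) = ∑ x, p i x * g x := by
  have key : ∀ c : ι → X, (∏ i', p i' (c i')) * g (c i)
      = ∏ i', (Function.update p i (fun x => p i x * g x)) i' (c i') := by
    intro c
    rw [Finset.prod_eq_mul_prod_sdiff_singleton_of_mem (mem_univ i)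
        (fun i' => (Function.update p i (fun x => p i x * g x)) i' (c i')),
      Finset.prod_eq_mul_prod_sdiff_singleton_of_mem (mem_univ i) (fun i' => p i' (c i'))]
    have h1 : (Function.update p i (fun x => p i x * g x)) i (c i) = p i (c i) * g (c i) := by
      simp
    rw [h1]
    have h2 : ∀ i' ∈ univ \ {i}, (Function.update p i (fun x => p i x * g x)) i' (c i')
        = p i' (c i') := by
      intro i' hi'
      simp only [mem_sdiff, mem_singleton] at hi'
      rw [Function.update_of_ne hi'.2]
    rw [Finset.prod_congr rfl h2]
    ring
  rw [Finset.sum_congr rfl (fun c _ => key c), sum_prod_fun]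
  rw [Finset.prod_eq_mul_prod_sdiff_singleton_of_mem (mem_univ i)]
  have h1 : ∑ x, (Function.update p i (fun x => p i x * g x)) i x = ∑ x, p i x * g x := by
    simp
  have h2 : ∀ i' ∈ univ \ {i}, ∑ x, (Function.update p i (fun x => p i x * g x)) i' x = 1 := by
    intro i' hi'
    simp only [mem_sdiff, mem_singleton] at hi'
    rw [show (Function.update p i (fun x => p i x * g x)) i' = p i' from
      Function.update_of_ne hi'.2 _ _]
    exact hp i' hi'.2
  rw [h1, Finset.prod_congr rfl h2, prod_const_one, mul_one]

lemma weierstrass {s : Finset ι} {p : ι → ℝ} (h0 : ∀ j ∈ s, 0 ≤ p j)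
    (h1 : ∀ j ∈ s, p j ≤ 1) :
    1 - ∑ j ∈ s, p j ≤ ∏ j ∈ s, (1 - p j) := by
  classical
  induction s using Finset.induction with
  | empty => simp
  | insert a s ha ih =>
    rename_i a s
    rw [Finset.sum_insert ha, Finset.prod_insert ha]
    have h0' := fun j hj => h0 j (mem_insert_of_mem hj)
    have h1' := fun j hj => h1 j (mem_insert_of_mem hj)
    have ihs := ih h0' h1'
    have hpa0 := h0 a (mem_insert_self a s)
    have hpa1 := h1 a (mem_insert_self a s)
    have hs0 : 0 ≤ ∑ j ∈ s, p j := Finset.sum_nonneg h0'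
    nlinarith [mul_le_mul_of_nonneg_left ihs (by linarith : (0:ℝ) ≤ 1 - p a)]

lemma weierstrass_eq {s : Finset ι} {p : ι → ℝ} (h0 : ∀ j ∈ s, 0 ≤ p j)
    (h1 : ∀ j ∈ s, p j ≤ 1) (heq : ∏ j ∈ s, (1 - p j) = 1 - ∑ j ∈ s, p j)
    {i : ι} (hi : i ∈ s) (hpi : 0 < p i) :
    ∀ j ∈ s, j ≠ i → p j = 0 := by
  classical
  have hsplit : ∏ j ∈ s, (1 - p j) = (1 - p i) * ∏ j ∈ s.erase i, (1 - p j) :=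
    Finset.prod_eq_mul_prod_sdiff_singleton_of_mem hi _ |>.trans (by rw [Finset.sdiff_singleton_eq_erase])
  have hW : 1 - ∑ j ∈ s.erase i, p j ≤ ∏ j ∈ s.erase i, (1 - p j) :=
    weierstrass (fun j hj => h0 j (Finset.mem_of_mem_erase hj))
      (fun j hj => h1 j (Finset.mem_of_mem_erase hj))
  have hsum : ∑ j ∈ s, p j = p i + ∑ j ∈ s.erase i, p j := (Finset.add_sum_erase s p hi).symm
  have hpi1 : (0:ℝ) ≤ 1 - p i := by linarith [h1 i hi]
  have key : p i * ∑ j ∈ s.erase i, p j ≤ 0 := by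
    have := mul_le_mul_of_nonneg_left hW hpi1
    rw [← hsplit, heq, hsum] at this
    nlinarith
  have hz : ∑ j ∈ s.erase i, p j = 0 := by
    have hs0 : 0 ≤ ∑ j ∈ s.erase i, p j :=
      Finset.sum_nonneg (fun j hj => h0 j (Finset.mem_of_mem_erase hj))
    nlinarith
  intro j hj hji
  have := (Finset.sum_eq_zero_iff_of_nonneg
    (fun k hk => h0 k (Finset.mem_of_mem_erase hk))).mp hz j (Finset.mem_erase.mpr ⟨hji, hj⟩)
  exact this


end AuxSumProd

section AuxVerts
set_option linter.unusedSectionVars false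


lemma verts_pair (a b : V) :
    Finset.univ.filter (fun v => v ∈ (s(a, b) : Sym2 V)) = {a, b} := by
  ext v; simp [Sym2.mem_iff, eq_comm]

lemma card_verts_le_two (e : Sym2 V) :
    (Finset.univ.filter (fun v => v ∈ e)).card ≤ 2 := by
  induction e with
  | _ a b => rw [verts_pair]; exact (Finset.card_insert_le _ _).trans (by simp)

lemma card_verts_eq_two {e : Sym2 V} (he : ¬ e.IsDiag) :
    (Finset.univ.filter (fun v => v ∈ e)).card = 2 := by
  induction e with
  | _ a b =>
    rw [verts_pair]
    rw [Sym2.isDiag_iff_proj_eq] at he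
    rw [Finset.card_insert_of_notMem (by simpa using he), Finset.card_singleton]

lemma sum_fracDeg_aux (g : Sym2 V → ℝ) :
    ∑ v : V, ∑ e ∈ Finset.univ.filter (fun e : Sym2 V => v ∈ e), g e
      = ∑ e : Sym2 V, ((Finset.univ.filter (fun v => v ∈ e)).card : ℝ) * g e := by
  simp_rw [Finset.sum_filter]
  rw [Finset.sum_comm]
  congr 1; ext e
  rw [← Finset.sum_filter, Finset.sum_const, nsmul_eq_mul]

end AuxVerts

namespace MixedProfile
set_option linter.unusedSectionVars false
variable {G : SimpleGraph V} {α δ : ℕ}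


lemma sum_configProb (σ : MixedProfile G α δ) : ∑ c : Config V α δ, σ.configProb c = 1 := by
  rw [Fintype.sum_prod_type]
  simp only [configProb]
  rw [← Finset.sum_mul_sum]
  rw [sum_prod_fun, sum_prod_fun]
  simp [σ.atk_sum, σ.dfn_sum]

-- pair marginalization
lemma sum_configProb_mul (σ : MixedProfile G α δ) (i : Fin α) (d : Fin δ)
    (g : V → Sym2 V → ℝ) :
    ∑ c : Config V α δ, σ.configProb c * g (c.1 i) (c.2 d)
      = ∑ v, ∑ e, σ.atk i v * σ.dfn d e * g v e := by
  rw [Fintype.sum_prod_type]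
  simp only [configProb]
  have inner : ∀ c1 : Fin α → V,
      ∑ c2 : Fin δ → Sym2 V, (∏ j, σ.dfn j (c2 j)) * g (c1 i) (c2 d)
        = ∑ e, σ.dfn d e * g (c1 i) e :=
    fun c1 => sum_prod_marginal σ.dfn d (fun j _ => σ.dfn_sum j) (g (c1 i))
  calc ∑ c1 : Fin α → V, ∑ c2 : Fin δ → Sym2 V,
        ((∏ i', σ.atk i' (c1 i')) * ∏ j, σ.dfn j (c2 j)) * g (c1 i) (c2 d)
      = ∑ c1 : Fin α → V, (∏ i', σ.atk i' (c1 i')) *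
          (∑ c2 : Fin δ → Sym2 V, (∏ j, σ.dfn j (c2 j)) * g (c1 i) (c2 d)) := by
        congr 1; ext c1; rw [Finset.mul_sum]; congr 1; ext c2; ring
    _ = ∑ c1 : Fin α → V, (∏ i', σ.atk i' (c1 i')) *
          ((fun v => ∑ e, σ.dfn d e * g v e) (c1 i)) := by
        congr 1; ext c1; rw [inner c1]
    _ = ∑ v, σ.atk i v * ∑ e, σ.dfn d e * g v e := by
        exact sum_prod_marginal σ.atk i (fun i' _ => σ.atk_sum i')
          (fun v => ∑ e, σ.dfn d e * g v e)
    _ = ∑ v, ∑ e, σ.atk i v * σ.dfn d e * g v e := by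
        congr 1; ext v; rw [Finset.mul_sum]; congr 1; ext e; ring



-- Lemma A: attacker expected utility formula
lemma expAtkUtil_eq (σ : MixedProfile G α δ) (a : Fin α) :
    σ.expAtkUtil a = ∑ v, σ.atk a v * ∏ j, (1 - fracDeg (σ.dfn j) v) := by
  have hpure : ∀ c : Config V α δ,
      atkUtilPure c a = ∏ j, (if c.1 a ∈ c.2 j then (0:ℝ) else 1) := by
    intro c
    unfold atkUtilPure
    by_cases h : ∃ j, c.1 a ∈ c.2 j
    · obtain ⟨j, hj⟩ := h
      rw [if_pos ⟨j, hj⟩, eq_comm]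
      exact Finset.prod_eq_zero (mem_univ j) (if_pos hj)
    · rw [if_neg h]
      push_neg at h
      exact (Finset.prod_eq_one (fun j _ => if_neg (h j))).symm
  have hfactor : ∀ v : V, ∀ j : Fin δ,
      ∑ e, σ.dfn j e * (if v ∈ e then (0:ℝ) else 1) = 1 - fracDeg (σ.dfn j) v := by
    intro v j
    have : ∀ e : Sym2 V, σ.dfn j e * (if v ∈ e then (0:ℝ) else 1)
        = σ.dfn j e - (if v ∈ e then σ.dfn j e else 0) := by
      intro e; by_cases h : v ∈ e <;> simp [h]
    rw [Finset.sum_congr rfl (fun e _ => this e), Finset.sum_sub_distrib, σ.dfn_sum,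
      ← Finset.sum_filter]
    rfl
  unfold expAtkUtil
  rw [Finset.sum_congr rfl (fun c _ => by rw [hpure c]), Fintype.sum_prod_type]
  simp only [configProb]
  have inner : ∀ c1 : Fin α → V,
      ∑ c2 : Fin δ → Sym2 V, (∏ j, σ.dfn j (c2 j)) * ∏ j, (if c1 a ∈ c2 j then (0:ℝ) else 1)
        = ∏ j, (1 - fracDeg (σ.dfn j) (c1 a)) := by
    intro c1
    have : ∀ c2 : Fin δ → Sym2 V,
        (∏ j, σ.dfn j (c2 j)) * ∏ j, (if c1 a ∈ c2 j then (0:ℝ) else 1)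
          = ∏ j, (σ.dfn j (c2 j) * (if c1 a ∈ c2 j then (0:ℝ) else 1)) := by
      intro c2; rw [Finset.prod_mul_distrib]
    rw [Finset.sum_congr rfl (fun c2 _ => this c2),
      sum_prod_fun (fun j e => σ.dfn j e * (if c1 a ∈ e then (0:ℝ) else 1))]
    exact Finset.prod_congr rfl (fun j _ => hfactor (c1 a) j)
  calc ∑ c1 : Fin α → V, ∑ c2 : Fin δ → Sym2 V,
        ((∏ i, σ.atk i (c1 i)) * ∏ j, σ.dfn j (c2 j)) * ∏ j, (if c1 a ∈ c2 j then (0:ℝ) else 1)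
      = ∑ c1 : Fin α → V, (∏ i, σ.atk i (c1 i)) *
          ((fun v => ∏ j, (1 - fracDeg (σ.dfn j) v)) (c1 a)) := by
        congr 1; ext c1
        show _ = (∏ i, σ.atk i (c1 i)) * ∏ j, (1 - fracDeg (σ.dfn j) (c1 a))
        rw [← inner c1, Finset.mul_sum]
        congr 1; ext c2; ring
    _ = ∑ v, σ.atk a v * ∏ j, (1 - fracDeg (σ.dfn j) v) := by
        exact sum_prod_marginal σ.atk a (fun i _ => σ.atk_sum i)
          (fun v => ∏ j, (1 - fracDeg (σ.dfn j) v))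

-- per-config identity
lemma sum_defUtilPure (c : Config V α δ) :
    ∑ d, defUtilPure c d = ∑ a, (1 - atkUtilPure c a) := by
  have lhs : ∑ d, defUtilPure c d
      = ∑ w : V, (if dfnCount c w = 0 then (0:ℝ) else (atkCount c w : ℝ)) := by
    unfold defUtilPure
    simp_rw [Finset.sum_filter]
    rw [Finset.sum_comm]
    congr 1; ext w
    rw [← Finset.sum_filter, Finset.sum_const, nsmul_eq_mul]
    by_cases h : dfnCount c w = 0
    · rw [if_pos h]
      have : (Finset.univ.filter (fun d : Fin δ => w ∈ c.2 d)).card = 0 := h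
      rw [this]; simp
    · rw [if_neg h]
      have hD : ((dfnCount c w : ℝ)) ≠ 0 := Nat.cast_ne_zero.mpr h
      show ((dfnCount c w : ℝ)) * ((atkCount c w : ℝ) / (dfnCount c w : ℝ)) = _
      field_simp
  have rhs : ∑ a, (1 - atkUtilPure c a)
      = ∑ w : V, (atkCount c w : ℝ) * (if dfnCount c w = 0 then (0:ℝ) else 1) := by
    have h1 : ∀ a : Fin α, 1 - atkUtilPure c a
        = (if dfnCount c (c.1 a) = 0 then (0:ℝ) else 1) := by
      intro a
      unfold atkUtilPure
      by_cases h : ∃ j, c.1 a ∈ c.2 j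
      · rw [if_pos h, if_neg]
        · ring
        · obtain ⟨j, hj⟩ := h
          unfold dfnCount
          exact (Finset.card_pos.mpr
            ⟨j, Finset.mem_filter.mpr ⟨mem_univ j, hj⟩⟩).ne'
      · rw [if_neg h, if_pos]
        · ring
        · unfold dfnCount
          rw [Finset.card_eq_zero, Finset.filter_eq_empty_iff]
          push_neg at h
          exact fun j _ => h j
    rw [Finset.sum_congr rfl (fun a _ => h1 a)]
    have h2 : ∀ a : Fin α, (if dfnCount c (c.1 a) = 0 then (0:ℝ) else 1)
        = ∑ w : V, if c.1 a = w then (if dfnCount c w = 0 then (0:ℝ) else 1) else 0 := by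
      intro a
      rw [Finset.sum_ite_eq (Finset.univ) (c.1 a)
        (fun w => if dfnCount c w = 0 then (0:ℝ) else 1)]
      simp
    rw [Finset.sum_congr rfl (fun a _ => h2 a), Finset.sum_comm]
    congr 1; ext w
    rw [← Finset.sum_filter, Finset.sum_const, nsmul_eq_mul]
    rfl
  rw [lhs, rhs]
  congr 1; ext w
  by_cases h : dfnCount c w = 0 <;> simp [h]

-- Lemma B
lemma sum_expDefUtil (σ : MixedProfile G α δ) :
    ∑ d, σ.expDefUtil d = ∑ a, (1 - σ.expAtkUtil a) := by
  unfold expDefUtil expAtkUtil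
  rw [Finset.sum_comm]
  have : ∀ c : Config V α δ, ∑ d, σ.configProb c * defUtilPure c d
      = ∑ a, (σ.configProb c * 1 - σ.configProb c * atkUtilPure c a) := by
    intro c
    rw [← Finset.mul_sum, sum_defUtilPure, Finset.mul_sum]
    congr 1; ext a; ring
  rw [Finset.sum_congr rfl (fun c _ => this c), Finset.sum_comm]
  congr 1; ext a
  rw [Finset.sum_sub_distrib]
  simp only [mul_one]
  rw [σ.sum_configProb]


lemma configProb_nonneg (σ : MixedProfile G α δ) (c : Config V α δ) :
    0 ≤ σ.configProb c :=
  mul_nonneg (Finset.prod_nonneg (fun i _ => σ.atk_nonneg i (c.1 i)))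
    (Finset.prod_nonneg (fun j _ => σ.dfn_nonneg j (c.2 j)))

lemma sum_atkCount_verts (c : Config V α δ) (e : Sym2 V) :
    ∑ w ∈ Finset.univ.filter (fun w : V => w ∈ e), (atkCount c w : ℝ)
      = ∑ i : Fin α, (if c.1 i ∈ e then (1:ℝ) else 0) := by
  have h : ∀ i : Fin α, (if c.1 i ∈ e then (1:ℝ) else 0)
      = ∑ w ∈ Finset.univ.filter (fun w : V => w ∈ e), (if c.1 i = w then (1:ℝ) else 0) := by
    intro i
    rw [Finset.sum_ite_eq (Finset.univ.filter (fun w : V => w ∈ e)) (c.1 i) (fun _ => (1:ℝ))]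
    simp
  rw [Finset.sum_congr rfl (fun i _ => h i), Finset.sum_comm]
  congr 1; ext w
  rw [← Finset.sum_filter, Finset.sum_const, nsmul_eq_mul, mul_one]
  rfl

lemma defUtilPure_le (c : Config V α δ) (d : Fin δ) :
    defUtilPure c d ≤ ∑ i : Fin α, (if c.1 i ∈ c.2 d then (1:ℝ) else 0) := by
  rw [← sum_atkCount_verts c (c.2 d)]
  apply Finset.sum_le_sum
  intro w hw
  rw [Finset.mem_filter] at hw
  have hD : 1 ≤ dfnCount c w :=
    Finset.card_pos.mpr ⟨d, Finset.mem_filter.mpr ⟨mem_univ d, hw.2⟩⟩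
  exact div_le_self (Nat.cast_nonneg _) (by exact_mod_cast hD)

lemma defUtilPure_eq_of_count_one (c : Config V α δ) (d : Fin δ)
    (h : ∀ w, w ∈ c.2 d → dfnCount c w = 1) :
    defUtilPure c d = ∑ i : Fin α, (if c.1 i ∈ c.2 d then (1:ℝ) else 0) := by
  rw [← sum_atkCount_verts c (c.2 d)]
  apply Finset.sum_congr rfl
  intro w hw
  rw [Finset.mem_filter] at hw
  rw [h w hw.2]
  simp

lemma expDefUtil_le (σ : MixedProfile G α δ) (d : Fin δ) :
    σ.expDefUtil d ≤ ∑ i : Fin α, ∑ v, ∑ e,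
      σ.atk i v * σ.dfn d e * (if v ∈ e then (1:ℝ) else 0) := by
  have h1 : σ.expDefUtil d ≤ ∑ c : Config V α δ, σ.configProb c *
      ∑ i : Fin α, (if c.1 i ∈ c.2 d then (1:ℝ) else 0) := by
    apply Finset.sum_le_sum
    intro c _
    exact mul_le_mul_of_nonneg_left (defUtilPure_le c d) (configProb_nonneg σ c)
  refine h1.trans_eq ?_
  have h2 : ∀ c : Config V α δ, σ.configProb c * ∑ i : Fin α, (if c.1 i ∈ c.2 d then (1:ℝ) else 0)
      = ∑ i : Fin α, σ.configProb c * (if c.1 i ∈ c.2 d then (1:ℝ) else 0) :=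
    fun c => Finset.mul_sum _ _ _
  rw [Finset.sum_congr rfl (fun c _ => h2 c), Finset.sum_comm]
  exact Finset.sum_congr rfl (fun i _ =>
    σ.sum_configProb_mul i d (fun v e => if v ∈ e then (1:ℝ) else 0))

lemma expDefUtil_eq_of_count_one (σ : MixedProfile G α δ) (d : Fin δ)
    (h : ∀ c : Config V α δ, σ.configProb c ≠ 0 → ∀ w, w ∈ c.2 d → dfnCount c w = 1) :
    σ.expDefUtil d = ∑ i : Fin α, ∑ v, ∑ e,
      σ.atk i v * σ.dfn d e * (if v ∈ e then (1:ℝ) else 0) := by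
  have h1 : σ.expDefUtil d = ∑ c : Config V α δ, σ.configProb c *
      ∑ i : Fin α, (if c.1 i ∈ c.2 d then (1:ℝ) else 0) := by
    apply Finset.sum_congr rfl
    intro c _
    by_cases hc : σ.configProb c = 0
    · rw [hc, zero_mul, zero_mul]
    · rw [defUtilPure_eq_of_count_one c d (h c hc)]
  rw [h1]
  have h2 : ∀ c : Config V α δ, σ.configProb c * ∑ i : Fin α, (if c.1 i ∈ c.2 d then (1:ℝ) else 0)
      = ∑ i : Fin α, σ.configProb c * (if c.1 i ∈ c.2 d then (1:ℝ) else 0) :=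
    fun c => Finset.mul_sum _ _ _
  rw [Finset.sum_congr rfl (fun c _ => h2 c), Finset.sum_comm]
  exact Finset.sum_congr rfl (fun i _ =>
    σ.sum_configProb_mul i d (fun v e => if v ∈ e then (1:ℝ) else 0))


lemma sum_triple_eval (τ : MixedProfile G α δ) (d : Fin δ)
    (h : ∀ i v, τ.atk i v = 1 / (Fintype.card V : ℝ)) (i : Fin α) :
    ∑ v, ∑ e, τ.atk i v * τ.dfn d e * (if v ∈ e then (1:ℝ) else 0)
      = ∑ e, τ.dfn d e * ((Finset.univ.filter (fun v : V => v ∈ e)).card : ℝ)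
          / (Fintype.card V : ℝ) := by
  rw [Finset.sum_comm]
  apply Finset.sum_congr rfl
  intro e _
  have : ∀ v : V, τ.atk i v * τ.dfn d e * (if v ∈ e then (1:ℝ) else 0)
      = τ.dfn d e / (Fintype.card V : ℝ) * (if v ∈ e then (1:ℝ) else 0) := by
    intro v; rw [h i v]; ring
  rw [Finset.sum_congr rfl (fun v _ => this v), ← Finset.mul_sum, Finset.sum_boole]
  ring

lemma expDefUtil_le_uniform [Nonempty V] (τ : MixedProfile G α δ) (d : Fin δ)
    (h : ∀ i v, τ.atk i v = 1 / (Fintype.card V : ℝ)) :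
    τ.expDefUtil d ≤ 2 * α / (Fintype.card V : ℝ) := by
  have hk0 : (0:ℝ) < (Fintype.card V : ℝ) := by
    have := Fintype.card_pos (α := V)
    exact_mod_cast this
  refine (τ.expDefUtil_le d).trans ?_
  rw [Finset.sum_congr rfl (fun i _ => sum_triple_eval τ d h i)]
  have hbound : ∀ i : Fin α, ∑ e, τ.dfn d e * ((Finset.univ.filter (fun v : V => v ∈ e)).card : ℝ)
      / (Fintype.card V : ℝ) ≤ 2 / (Fintype.card V : ℝ) := by
    intro i
    have : ∀ e : Sym2 V, τ.dfn d e * ((Finset.univ.filter (fun v : V => v ∈ e)).card : ℝ)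
        / (Fintype.card V : ℝ) ≤ τ.dfn d e * 2 / (Fintype.card V : ℝ) := by
      intro e
      have h2 : ((Finset.univ.filter (fun v : V => v ∈ e)).card : ℝ) ≤ 2 := by
        exact_mod_cast card_verts_le_two e
      have h3 := τ.dfn_nonneg d e
      gcongr
    refine (Finset.sum_le_sum (fun e _ => this e)).trans_eq ?_
    rw [← Finset.sum_div, ← Finset.sum_mul, τ.dfn_sum d]
    ring
  refine (Finset.sum_le_sum (fun i _ => hbound i)).trans_eq ?_
  rw [Finset.sum_const, Finset.card_univ, Fintype.card_fin, nsmul_eq_mul]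
  ring

end MixedProfile

set_option maxHeartbeats 1000000 in
lemma reverse_direction (G : SimpleGraph V) [Nonempty V]
    (α δ : ℕ) (hα : 1 ≤ α) (hδ : 1 ≤ δ)
    (hle : (δ : ℝ) ≤ (Fintype.card V : ℝ) / 2)
    (f : Sym2 V → ℝ) (hf : IsFPM G f) (hp : IsDeltaPartitionable f δ) :
    ∃ σ : MixedProfile G α δ, σ.IsNash ∧
        σ.defenseRatio = max 1 ((Fintype.card V : ℝ) / (2 * δ)) := by
  classical
  obtain ⟨P, hPne, hPdisj, hPsub, hPcover, hPsum⟩ := hp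
  have hk0 : (0:ℝ) < (Fintype.card V : ℝ) := by exact_mod_cast Fintype.card_pos
  set k : ℝ := (Fintype.card V : ℝ) with hkdef
  have hδ0 : (0:ℝ) < (δ:ℝ) := by exact_mod_cast hδ
  have hα0 : (0:ℝ) < (α:ℝ) := by exact_mod_cast hα
  have hkne : k ≠ 0 := hk0.ne'
  have hδne : (δ:ℝ) ≠ 0 := hδ0.ne'
  have hαne : (α:ℝ) ≠ 0 := hα0.ne'
  have hf0 : ∀ e, 0 ≤ f e := fun e => (hf.1 e).1
  have hfedge := hf.2.1
  have hfdeg := hf.2.2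
  have hPpos : ∀ j, ∀ e ∈ P j, 0 < f e := fun j e he =>
    (Finset.mem_filter.mp (hPsub j he)).2
  have hPedge : ∀ j, ∀ e ∈ P j, e ∈ G.edgeSet := by
    intro j e he
    by_contra hne
    exact absurd (hfedge e hne) (hPpos j e he).ne'
  have hPdisj' : ∀ j1 j2, j1 ≠ j2 → ∀ e, e ∈ P j1 → e ∉ P j2 := by
    intro j1 j2 hne e h1 h2
    exact hPdisj j1 j2 hne e.out.1 ⟨e, h1, Sym2.out_fst_mem e⟩ ⟨e, h2, Sym2.out_fst_mem e⟩
  have hatk_sum : ∀ _ : Fin α, ∑ _ : V, 1/k = 1 := by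
    intro i; rw [Finset.sum_const, Finset.card_univ, nsmul_eq_mul]; field_simp; exact hkdef.symm
  have hdfn_sum : ∀ j, ∑ e : Sym2 V, (if e ∈ P j then f e * (2*δ/k) else 0) = 1 := by
    intro j
    rw [Finset.sum_ite_mem, Finset.univ_inter, ← Finset.sum_mul, hPsum j]
    field_simp
  set σ : MixedProfile G α δ :=
    { atk := fun _ _ => 1/k
      dfn := fun j e => if e ∈ P j then f e * (2*δ/k) else 0
      atk_nonneg := fun _ _ => by positivity
      atk_sum := hatk_sum
      dfn_nonneg := fun j e => by
        show (0:ℝ) ≤ if e ∈ P j then f e * (2*δ/k) else 0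
        by_cases h : e ∈ P j
        · rw [if_pos h]; have := hPpos j e h; positivity
        · rw [if_neg h]
      dfn_edge := fun j e he => by
        show (if e ∈ P j then f e * (2*δ/k) else 0) = 0
        by_cases h : e ∈ P j
        · exact absurd (hPedge j e h) he
        · rw [if_neg h]
      dfn_sum := hdfn_sum } with hσ
  have hatk : ∀ i v, σ.atk i v = 1/k := fun i v => rfl
  have hdfn : ∀ j e, σ.dfn j e = if e ∈ P j then f e * (2*δ/k) else 0 := fun j e => rfl
  -- key structural fact about coverage
  have key : ∀ v : V, ∃ j0 : Fin δ, fracDeg (σ.dfn j0) v = 2*δ/k ∧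
      ∀ j, j ≠ j0 → fracDeg (σ.dfn j) v = 0 := by
    intro v
    set S : Fin δ → ℝ := fun j =>
      ∑ e ∈ Finset.univ.filter (fun e : Sym2 V => v ∈ e), (if e ∈ P j then f e else 0) with hS
    have hfrac : ∀ j, fracDeg (σ.dfn j) v = S j * (2*δ/k) := by
      intro j
      simp only [hS]
      rw [Finset.sum_mul]
      show (∑ e ∈ Finset.univ.filter (fun e : Sym2 V => v ∈ e), σ.dfn j e) = _
      apply Finset.sum_congr rfl
      intro e _
      rw [hdfn j e]
      by_cases h : e ∈ P j <;> simp [h]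
    have hsum1 : ∑ j, S j = 1 := by
      simp only [hS]
      rw [Finset.sum_comm]
      have hper : ∀ e ∈ Finset.univ.filter (fun e : Sym2 V => v ∈ e),
          ∑ j, (if e ∈ P j then f e else 0) = f e := by
        intro e _
        by_cases hfe : f e = 0
        · simp [hfe]
        · have hes : e ∈ fSupp f := Finset.mem_filter.mpr
            ⟨Finset.mem_univ e, lt_of_le_of_ne (hf0 e) (Ne.symm hfe)⟩
          obtain ⟨j0, hj0⟩ := hPcover e hes
          rw [Finset.sum_eq_single j0
            (fun j _ hj => if_neg (fun hej => hPdisj' j j0 hj e hej hj0))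
            (fun h => absurd (Finset.mem_univ j0) h), if_pos hj0]
      rw [Finset.sum_congr rfl hper]
      exact hfdeg v
    have hpos_ex : ∀ j, S j ≠ 0 → ∃ e ∈ P j, v ∈ e := by
      intro j hne
      simp only [hS] at hne
      obtain ⟨e, he, hne'⟩ := Finset.exists_ne_zero_of_sum_ne_zero hne
      rw [Finset.mem_filter] at he
      by_cases h : e ∈ P j
      · exact ⟨e, h, he.2⟩
      · rw [if_neg h] at hne'; exact absurd rfl hne'
    obtain ⟨j0, hj0⟩ : ∃ j0, S j0 ≠ 0 := by
      by_contra h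
      push_neg at h
      rw [Finset.sum_eq_zero (fun j _ => h j)] at hsum1
      norm_num at hsum1
    have hzero : ∀ j, j ≠ j0 → S j = 0 := by
      intro j hj
      by_contra hne
      obtain ⟨e1, he1, hv1⟩ := hpos_ex j hne
      obtain ⟨e0, he0, hv0⟩ := hpos_ex j0 hj0
      exact hPdisj j j0 hj v ⟨e1, he1, hv1⟩ ⟨e0, he0, hv0⟩
    have hone : S j0 = 1 := by
      rw [← hsum1, eq_comm, Finset.sum_eq_single j0 (fun j _ hj => hzero j hj)
        (fun h => absurd (Finset.mem_univ j0) h)]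
    exact ⟨j0, by rw [hfrac j0, hone, one_mul],
      fun j hj => by rw [hfrac j, hzero j hj, zero_mul]⟩
  have hprod : ∀ v : V, ∏ j, (1 - fracDeg (σ.dfn j) v) = 1 - 2*δ/k := by
    intro v
    obtain ⟨j0, h1, h2⟩ := key v
    rw [Finset.prod_eq_single j0 (fun j _ hj => by rw [h2 j hj, sub_zero])
      (fun h => absurd (Finset.mem_univ j0) h), h1]
  have hatkutil : ∀ (τ : MixedProfile G α δ), τ.dfn = σ.dfn →
      ∀ a, τ.expAtkUtil a = 1 - 2*δ/k := by
    intro τ hτ a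
    rw [τ.expAtkUtil_eq a]
    have hp : ∀ v : V, ∏ j, (1 - fracDeg (τ.dfn j) v) = 1 - 2*δ/k := by
      intro v; rw [hτ]; exact hprod v
    calc ∑ v, τ.atk a v * ∏ j, (1 - fracDeg (τ.dfn j) v)
        = ∑ v, τ.atk a v * (1 - 2*δ/k) := by
          apply Finset.sum_congr rfl; intro v _; rw [hp v]
      _ = 1 - 2*δ/k := by rw [← Finset.sum_mul, τ.atk_sum a, one_mul]
  have hdefutil : ∀ d, σ.expDefUtil d = 2*α/k := by
    intro d
    have hcount : ∀ c : MixedProfile.Config V α δ, σ.configProb c ≠ 0 →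
        ∀ w, w ∈ c.2 d → MixedProfile.dfnCount c w = 1 := by
      intro c hc w hw
      have hc' : (∏ i, σ.atk i (c.1 i)) * (∏ j, σ.dfn j (c.2 j)) ≠ 0 := hc
      have hdfnne : ∀ j, σ.dfn j (c.2 j) ≠ 0 := by
        intro j
        exact Finset.prod_ne_zero_iff.mp (right_ne_zero_of_mul hc') j (Finset.mem_univ j)
      have hmem : ∀ j, c.2 j ∈ P j := by
        intro j
        by_contra h
        exact hdfnne j (by rw [hdfn j (c.2 j), if_neg h])
      show (Finset.univ.filter (fun j : Fin δ => w ∈ c.2 j)).card = 1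
      rw [Finset.card_eq_one]
      refine ⟨d, ?_⟩
      ext j
      simp only [Finset.mem_filter, Finset.mem_univ, true_and, Finset.mem_singleton]
      constructor
      · intro hwj
        by_contra hjd
        exact hPdisj j d hjd w ⟨c.2 j, hmem j, hwj⟩ ⟨c.2 d, hmem d, hw⟩
      · rintro rfl; exact hw
    rw [σ.expDefUtil_eq_of_count_one d hcount]
    rw [Finset.sum_congr rfl (fun i _ => MixedProfile.sum_triple_eval σ d hatk i)]
    have hper : ∀ _ : Fin α,
        ∑ e, σ.dfn d e * ((Finset.univ.filter (fun v : V => v ∈ e)).card : ℝ) / k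
          = 2/k := by
      intro i
      have h1 : ∀ e : Sym2 V,
          σ.dfn d e * ((Finset.univ.filter (fun v : V => v ∈ e)).card : ℝ) / k
            = σ.dfn d e * (2 / k) := by
        intro e
        by_cases h : σ.dfn d e = 0
        · rw [h]; ring
        · have hmem : e ∈ P d := by
            by_contra hmem
            exact h (by rw [hdfn d e, if_neg hmem])
          have hnd : ¬ e.IsDiag := G.not_isDiag_of_mem_edgeSet (hPedge d e hmem)
          rw [card_verts_eq_two hnd]
          push_cast
          ring
      rw [Finset.sum_congr rfl (fun e _ => h1 e), ← Finset.sum_mul, σ.dfn_sum d, one_mul]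
    rw [Finset.sum_congr rfl (fun i _ => hper i), Finset.sum_const, Finset.card_univ,
      Fintype.card_fin, nsmul_eq_mul]
    ring
  refine ⟨σ, ⟨?_, ?_⟩, ?_⟩
  · intro τ a hτa hτd
    exact le_of_eq ((hatkutil τ hτd a).trans (hatkutil σ rfl a).symm)
  · intro τ d hτa hτd
    have hu : ∀ i v, τ.atk i v = 1/(Fintype.card V : ℝ) := by
      intro i v; rw [hτa]; try exact hatk i v
    exact (τ.expDefUtil_le_uniform d hu).trans_eq (hdefutil d).symm
  · show (α:ℝ) / (∑ d, σ.expDefUtil d) = _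
    rw [Finset.sum_congr rfl (fun d _ => hdefutil d), Finset.sum_const, Finset.card_univ,
      Fintype.card_fin, nsmul_eq_mul]
    have hmax : max 1 (k / (2*(δ:ℝ))) = k/(2*δ) := by
      apply max_eq_right
      rw [le_div_iff₀ (by positivity)]
      linarith
    rw [hmax]
    field_simp

set_option maxHeartbeats 1000000 in
lemma forward_direction (G : SimpleGraph V) [Nonempty V]
    (α δ : ℕ) (hα : 1 ≤ α) (hδ : 1 ≤ δ)
    (hle : (δ : ℝ) ≤ (Fintype.card V : ℝ) / 2)
    (σ : MixedProfile G α δ) (hN : σ.IsNash)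
    (hDR : σ.defenseRatio = max 1 ((Fintype.card V : ℝ) / (2 * δ))) :
    ∃ f : Sym2 V → ℝ, IsFPM G f ∧ IsDeltaPartitionable f δ := by
  classical
  have hk0 : (0:ℝ) < (Fintype.card V : ℝ) := by exact_mod_cast Fintype.card_pos
  set k : ℝ := (Fintype.card V : ℝ) with hkdef
  have hδ0 : (0:ℝ) < (δ:ℝ) := by exact_mod_cast hδ
  have hα0 : (0:ℝ) < (α:ℝ) := by exact_mod_cast hα
  have hkne : k ≠ 0 := hk0.ne'
  have hδne : (δ:ℝ) ≠ 0 := hδ0.ne'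
  have hαne : (α:ℝ) ≠ 0 := hα0.ne'
  have hmax : max 1 (k / (2*(δ:ℝ))) = k/(2*δ) := by
    apply max_eq_right
    rw [le_div_iff₀ (by positivity)]
    linarith
  rw [hmax] at hDR
  set p : Fin δ → V → ℝ := fun j v => fracDeg (σ.dfn j) v with hpdef
  have hp0 : ∀ j v, 0 ≤ p j v :=
    fun j v => Finset.sum_nonneg (fun e _ => σ.dfn_nonneg j e)
  have hp1 : ∀ j v, p j v ≤ 1 := by
    intro j v
    have : ∑ e ∈ Finset.univ.filter (fun e : Sym2 V => v ∈ e), σ.dfn j e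
        ≤ ∑ e : Sym2 V, σ.dfn j e :=
      Finset.sum_le_sum_of_subset_of_nonneg (Finset.filter_subset _ _)
        (fun e _ _ => σ.dfn_nonneg j e)
    rw [σ.dfn_sum j] at this
    exact this
  -- total defender utility equals expected caught attackers
  have hBexp : ∀ a : Fin α, 1 - σ.expAtkUtil a = ∑ v, σ.atk a v * σ.hitProb v := by
    intro a
    rw [σ.expAtkUtil_eq a]
    have h1 : ∀ v : V, σ.atk a v * σ.hitProb v
        = σ.atk a v - σ.atk a v * ∏ j, (1 - fracDeg (σ.dfn j) v) := by
      intro v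
      show σ.atk a v * (1 - ∏ j, (1 - fracDeg (σ.dfn j) v)) = _
      ring
    rw [Finset.sum_congr rfl (fun v _ => h1 v), Finset.sum_sub_distrib, σ.atk_sum a]
  have hB : ∑ d, σ.expDefUtil d = ∑ a, ∑ v, σ.atk a v * σ.hitProb v := by
    rw [σ.sum_expDefUtil]
    exact Finset.sum_congr rfl (fun a _ => hBexp a)
  -- Nash condition for attackers: deviation to a point mass
  have hdev : ∀ (a : Fin α) (v0 : V),
      ∑ v, σ.atk a v * σ.hitProb v ≤ σ.hitProb v0 := by
    intro a v0
    set τ : MixedProfile G α δ :=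
      { atk := Function.update σ.atk a (fun v => if v = v0 then 1 else 0)
        dfn := σ.dfn
        atk_nonneg := by
          intro i v
          by_cases h : i = a
          · subst h
            rw [Function.update_self]
            by_cases h' : v = v0 <;> simp [h']
          · rw [Function.update_of_ne h]
            exact σ.atk_nonneg i v
        atk_sum := by
          intro i
          by_cases h : i = a
          · subst h
            rw [Function.update_self]
            rw [Finset.sum_ite_eq' Finset.univ v0 (fun _ => (1:ℝ))]
            simp
          · rw [Function.update_of_ne h]
            exact σ.atk_sum i
        dfn_nonneg := σ.dfn_nonneg
        dfn_edge := σ.dfn_edge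
        dfn_sum := σ.dfn_sum } with hτ
    have hle1 : τ.expAtkUtil a ≤ σ.expAtkUtil a :=
      hN.1 τ a (fun i hi => Function.update_of_ne hi _ _) rfl
    have hτval : τ.expAtkUtil a = 1 - σ.hitProb v0 := by
      rw [τ.expAtkUtil_eq a]
      have hτatk : ∀ v, τ.atk a v = if v = v0 then (1:ℝ) else 0 := fun v => by
        show Function.update σ.atk a _ a v = _
        rw [Function.update_self]
      have hτdfn : ∀ j, τ.dfn j = σ.dfn j := fun j => rfl
      have h2 : ∀ v : V, τ.atk a v * ∏ j, (1 - fracDeg (τ.dfn j) v)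
          = if v = v0 then ∏ j, (1 - fracDeg (σ.dfn j) v) else 0 := by
        intro v
        rw [hτatk v]
        by_cases h : v = v0 <;> simp [h, hτdfn]
      rw [Finset.sum_congr rfl (fun v _ => h2 v),
        Finset.sum_ite_eq' Finset.univ v0 (fun v => ∏ j, (1 - fracDeg (σ.dfn j) v))]
      simp only [Finset.mem_univ, if_true]
      show _ = 1 - (1 - ∏ j, (1 - fracDeg (σ.dfn j) v0))
      ring
    have hσval : σ.expAtkUtil a = 1 - ∑ v, σ.atk a v * σ.hitProb v := by
      rw [eq_sub_iff_add_eq, ← hBexp a]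
      ring
    rw [hτval, hσval] at hle1
    linarith
  -- the total defender utility equals 2δα/k
  have hsum : ∑ d, σ.expDefUtil d = 2*δ*α/k := by
    have hne : ∑ d, σ.expDefUtil d ≠ 0 := by
      intro h
      rw [MixedProfile.defenseRatio, h, div_zero] at hDR
      have : (0:ℝ) < k/(2*δ) := by positivity
      rw [← hDR] at this
      exact lt_irrefl 0 this
    rw [MixedProfile.defenseRatio, div_eq_div_iff hne (by positivity : (0:ℝ) < 2*(δ:ℝ)).ne']
      at hDR
    rw [eq_div_iff hkne]
    linear_combination -hDR
  -- hence every vertex is hit with probability at least 2δ/k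
  have hhit_ge : ∀ v0 : V, 2*δ/k ≤ σ.hitProb v0 := by
    intro v0
    have h1 : ∑ d, σ.expDefUtil d ≤ α * σ.hitProb v0 := by
      rw [hB]
      have : ∀ a : Fin α, ∑ v, σ.atk a v * σ.hitProb v ≤ σ.hitProb v0 :=
        fun a => hdev a v0
      refine (Finset.sum_le_sum (fun a _ => this a)).trans_eq ?_
      rw [Finset.sum_const, Finset.card_univ, Fintype.card_fin, nsmul_eq_mul]
    rw [hsum] at h1
    rw [div_le_iff₀ hk0] at h1 ⊢
    nlinarith [h1, hα0]
  -- hitProb is at most the sum of the individual coverage probabilities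
  have hhit_le : ∀ v : V, σ.hitProb v ≤ ∑ j, p j v := by
    intro v
    have := weierstrass (s := Finset.univ) (p := fun j => p j v)
      (fun j _ => hp0 j v) (fun j _ => hp1 j v)
    show 1 - ∏ j, (1 - fracDeg (σ.dfn j) v) ≤ _
    linarith
  -- the total coverage is 2δ
  have htotal : ∑ v, ∑ j, p j v = 2*δ := by
    rw [Finset.sum_comm]
    have hinner : ∀ j : Fin δ, ∑ v, p j v = 2 := by
      intro j
      have h1 : ∑ v, p j v = ∑ e : Sym2 V,
          ((Finset.univ.filter (fun v : V => v ∈ e)).card : ℝ) * σ.dfn j e :=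
        sum_fracDeg_aux (σ.dfn j)
      rw [h1]
      have h2 : ∀ e : Sym2 V,
          ((Finset.univ.filter (fun v : V => v ∈ e)).card : ℝ) * σ.dfn j e
            = 2 * σ.dfn j e := by
        intro e
        by_cases h : σ.dfn j e = 0
        · rw [h, mul_zero, mul_zero]
        · have he : e ∈ G.edgeSet := by
            by_contra hne
            exact h (σ.dfn_edge j e hne)
          rw [card_verts_eq_two (G.not_isDiag_of_mem_edgeSet he)]
          norm_num
      rw [Finset.sum_congr rfl (fun e _ => h2 e), ← Finset.mul_sum, σ.dfn_sum j, mul_one]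
    rw [Finset.sum_congr rfl (fun j _ => hinner j), Finset.sum_const, Finset.card_univ,
      Fintype.card_fin, nsmul_eq_mul]
    ring
  -- equalities everywhere
  have hchain1 : ∑ v : V, σ.hitProb v = 2*δ := by
    have hlow : 2*(δ:ℝ) ≤ ∑ v : V, σ.hitProb v := by
      have : ∀ v : V, 2*δ/k ≤ σ.hitProb v := hhit_ge
      have h2 := Finset.sum_le_sum (fun v (_ : v ∈ Finset.univ) => this v)
      rw [Finset.sum_const, Finset.card_univ, nsmul_eq_mul] at h2
      calc 2*(δ:ℝ) = k * (2*δ/k) := by field_simp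
        _ ≤ ∑ v : V, σ.hitProb v := h2
    have hhigh : ∑ v : V, σ.hitProb v ≤ 2*δ := by
      calc ∑ v : V, σ.hitProb v ≤ ∑ v, ∑ j, p j v := Finset.sum_le_sum
            (fun v _ => hhit_le v)
        _ = 2*δ := htotal
    linarith
  have hhit_eq : ∀ v : V, σ.hitProb v = 2*δ/k := by
    have hz : ∑ v : V, (σ.hitProb v - 2*δ/k) = 0 := by
      rw [Finset.sum_sub_distrib, hchain1, Finset.sum_const, Finset.card_univ, nsmul_eq_mul]
      field_simp; simp [hkdef]
    have := (Finset.sum_eq_zero_iff_of_nonneg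
      (fun v (_ : v ∈ Finset.univ) => sub_nonneg.mpr (hhit_ge v))).mp hz
    intro v
    have hv := this v (Finset.mem_univ v)
    linarith [sub_eq_zero.mp hv]
  have hp_eq : ∀ v : V, ∑ j, p j v = 2*δ/k := by
    have hz : ∑ v : V, (∑ j, p j v - σ.hitProb v) = 0 := by
      rw [Finset.sum_sub_distrib, htotal, hchain1]
      ring
    have := (Finset.sum_eq_zero_iff_of_nonneg
      (fun v (_ : v ∈ Finset.univ) => sub_nonneg.mpr (hhit_le v))).mp hz
    intro v
    have hv := this v (Finset.mem_univ v)
    rw [sub_eq_zero.mp hv, hhit_eq v]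
  -- at most one defender covers each vertex
  have huniq : ∀ (v : V) (j1 j2 : Fin δ), j1 ≠ j2 → 0 < p j1 v → p j2 v = 0 := by
    intro v j1 j2 hne h1
    have heq : ∏ j, (1 - p j v) = 1 - ∑ j, p j v := by
      have h2 : σ.hitProb v = 1 - ∏ j, (1 - p j v) := rfl
      have h3 : σ.hitProb v = ∑ j, p j v := by rw [hhit_eq v, hp_eq v]
      linarith [h2 ▸ h3]
    exact weierstrass_eq (fun j _ => hp0 j v) (fun j _ => hp1 j v) heq
      (Finset.mem_univ j1) h1 j2 (Finset.mem_univ j2) (Ne.symm hne)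
  -- define the fractional perfect matching
  set F : Sym2 V → ℝ := fun e => (k/(2*δ)) * ∑ j, σ.dfn j e with hF
  have hF0 : ∀ e, 0 ≤ F e := by
    intro e
    apply mul_nonneg (by positivity)
    exact Finset.sum_nonneg (fun j _ => σ.dfn_nonneg j e)
  have hFedge : ∀ e, e ∉ G.edgeSet → F e = 0 := by
    intro e he
    show (k/(2*δ)) * ∑ j, σ.dfn j e = 0
    rw [Finset.sum_eq_zero (fun j _ => σ.dfn_edge j e he), mul_zero]
  have hFdeg : ∀ v, fracDeg F v = 1 := by
    intro v
    show ∑ e ∈ Finset.univ.filter (fun e : Sym2 V => v ∈ e), F e = 1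
    have h1 : ∑ e ∈ Finset.univ.filter (fun e : Sym2 V => v ∈ e), F e
        = (k/(2*δ)) * ∑ j, p j v := by
      show ∑ e ∈ Finset.univ.filter (fun e : Sym2 V => v ∈ e),
          (k/(2*δ)) * ∑ j, σ.dfn j e = _
      rw [← Finset.mul_sum]
      congr 1
      rw [Finset.sum_comm]
      exact Finset.sum_congr rfl (fun j _ => rfl)
    rw [h1, hp_eq v]
    field_simp
  have hFle : ∀ e, F e ≤ 1 := by
    intro e
    have hv : e.out.1 ∈ e := Sym2.out_fst_mem e
    have h1 : F e ≤ ∑ e' ∈ Finset.univ.filter (fun e' : Sym2 V => e.out.1 ∈ e'), F e' :=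
      Finset.single_le_sum (fun e' _ => hF0 e')
        (Finset.mem_filter.mpr ⟨Finset.mem_univ e, hv⟩)
    have h2 : ∑ e' ∈ Finset.univ.filter (fun e' : Sym2 V => e.out.1 ∈ e'), F e' = 1 :=
      hFdeg e.out.1
    linarith
  -- positivity transfer
  have hFpos : ∀ j e, 0 < σ.dfn j e → 0 < F e := by
    intro j e h
    have h1 : σ.dfn j e ≤ ∑ j', σ.dfn j' e :=
      Finset.single_le_sum (fun j' _ => σ.dfn_nonneg j' e) (Finset.mem_univ j)
    have : 0 < ∑ j', σ.dfn j' e := lt_of_lt_of_le h h1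
    show 0 < (k/(2*δ)) * ∑ j', σ.dfn j' e
    positivity
  have hpcov : ∀ j e, 0 < σ.dfn j e → ∀ v ∈ e, 0 < p j v := by
    intro j e h v hv
    have h1 : σ.dfn j e ≤ p j v :=
      Finset.single_le_sum (fun e' _ => σ.dfn_nonneg j e')
        (Finset.mem_filter.mpr ⟨Finset.mem_univ e, hv⟩)
    linarith
  refine ⟨F, ⟨fun e => ⟨hF0 e, hFle e⟩, hFedge, hFdeg⟩,
    fun j => Finset.univ.filter (fun e => 0 < σ.dfn j e), ?_, ?_, ?_, ?_, ?_⟩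
  · -- nonempty
    intro j
    have h1 : ∑ e : Sym2 V, σ.dfn j e = 1 := σ.dfn_sum j
    have h2 : ∃ e, σ.dfn j e ≠ 0 := by
      by_contra h
      push_neg at h
      rw [Finset.sum_eq_zero (fun e _ => h e)] at h1
      norm_num at h1
    obtain ⟨e, he⟩ := h2
    exact ⟨e, Finset.mem_filter.mpr ⟨Finset.mem_univ e,
      lt_of_le_of_ne (σ.dfn_nonneg j e) (Ne.symm he)⟩⟩
  · -- vertex-disjoint
    intro j1 j2 hne v h1 h2
    obtain ⟨e1, he1, hv1⟩ := h1
    obtain ⟨e2, he2, hv2⟩ := h2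
    rw [Finset.mem_filter] at he1 he2
    have hp1' : 0 < p j1 v := hpcov j1 e1 he1.2 v hv1
    have hp2' : 0 < p j2 v := hpcov j2 e2 he2.2 v hv2
    rw [huniq v j1 j2 hne hp1'] at hp2'
    exact lt_irrefl 0 hp2'
  · -- subsets of support
    intro j e he
    rw [Finset.mem_filter] at he
    exact Finset.mem_filter.mpr ⟨Finset.mem_univ e, hFpos j e he.2⟩
  · -- cover
    intro e he
    rw [fSupp, Finset.mem_filter] at he
    have h1 : 0 < ∑ j, σ.dfn j e := by
      have h2 : 0 < F e := he.2
      by_contra h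
      push_neg at h
      have h3 : ∑ j, σ.dfn j e = 0 := le_antisymm h
        (Finset.sum_nonneg (fun j _ => σ.dfn_nonneg j e))
      rw [hF] at h2
      simp only [h3, mul_zero] at h2
      exact lt_irrefl 0 h2
    have h2 : ∃ j, σ.dfn j e ≠ 0 := by
      by_contra h
      push_neg at h
      rw [Finset.sum_eq_zero (fun j _ => h j)] at h1
      exact lt_irrefl 0 h1
    obtain ⟨j, hj⟩ := h2
    exact ⟨j, Finset.mem_filter.mpr ⟨Finset.mem_univ e,
      lt_of_le_of_ne (σ.dfn_nonneg j e) (Ne.symm hj)⟩⟩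
  · -- sums
    intro j
    have hFP : ∀ e ∈ Finset.univ.filter (fun e => 0 < σ.dfn j e),
        F e = (k/(2*δ)) * σ.dfn j e := by
      intro e he
      rw [Finset.mem_filter] at he
      show (k/(2*δ)) * ∑ j', σ.dfn j' e = _
      congr 1
      rw [Finset.sum_eq_single j _ (fun h => absurd (Finset.mem_univ j) h)]
      intro j' _ hj'
      by_contra h
      have hpos : 0 < σ.dfn j' e := lt_of_le_of_ne (σ.dfn_nonneg j' e) (Ne.symm h)
      have hv : e.out.1 ∈ e := Sym2.out_fst_mem e
      have h1 : 0 < p j' e.out.1 := hpcov j' e hpos e.out.1 hv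
      have h2 : 0 < p j e.out.1 := hpcov j e he.2 e.out.1 hv
      rw [huniq e.out.1 j' j hj' h1] at h2
      exact lt_irrefl 0 h2
    rw [Finset.sum_congr rfl hFP, ← Finset.mul_sum]
    have h3 : ∑ e ∈ Finset.univ.filter (fun e => 0 < σ.dfn j e), σ.dfn j e
        = ∑ e : Sym2 V, σ.dfn j e := by
      apply Finset.sum_filter_of_ne
      intro e _ h
      exact lt_of_le_of_ne (σ.dfn_nonneg j e) (Ne.symm h)
    rw [h3, σ.dfn_sum j, mul_one]

set_option maxHeartbeats 1000000 in
/-- assume `δ ≤ |V|/2`. Then `AD_{α,δ}(G)` admits a Defense-Optimal Nash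
equilibrium (one with `DR_σ = max {1, |V|/(2δ)}`) iff `G` has a `δ`-Partitionable
fractional perfect matching. -/
theorem defense_optimal_iff_delta_partitionable (G : SimpleGraph V) [Nonempty V]
    (hG : ∀ v : V, ∃ u, G.Adj u v) (α δ : ℕ) (hα : 1 ≤ α) (hδ : 1 ≤ δ)
    (hle : (δ : ℝ) ≤ (Fintype.card V : ℝ) / 2) :
    (∃ σ : MixedProfile G α δ, σ.IsNash ∧
        σ.defenseRatio = max 1 ((Fintype.card V : ℝ) / (2 * δ))) ↔
    ∃ f : Sym2 V → ℝ, IsFPM G f ∧ IsDeltaPartitionable f δ := by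
  constructor
  · rintro ⟨σ, hN, hDR⟩
    exact forward_direction G α δ hα hδ hle σ hN hDR
  · rintro ⟨f, hf, hp⟩
    exact reverse_direction G α δ hα hδ hle f hf hp
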